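/- Let P(x₁,…,x_n) be a multivariate polynomial over a field (or over GF(2^b)), and let L be a set of k labels. For each i ∈ {1,…,n} and j ∈ L introduce a variable z_{i,j}, and for A ⊆ L set zᵢ^A = Σ_{j∈A} z_{i,j}. Suppose P is homogeneous of degree k in the x-variables. Then the polynomial Q(z) = Σ_{A ⊆ L} P(z₁^A, …, z_n^A), computed in characteristic 2, is identically zero if and only if P has no multilinear monomial of degree k; equivalently, Q is not identically zero as a polynomial in the z-variables if and only if P contains at least one multilinear monomial. -/

import Mathlib

open Finset MvPolynomial

namespace Stmt7Aux

variable {n k : ℕ}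

/-- number of labels mapped to each variable by a labelling `f`. -/
noncomputable def cnt (f : Fin k → Fin n) : Fin n →₀ ℕ := ∑ j, Finsupp.single (f j) 1

/-- the `z`-monomial exponent vector associated to a labelling `f`. -/
noncomputable def mu (f : Fin k → Fin n) : (Fin n × Fin k) →₀ ℕ :=
  ∑ j, Finsupp.single (f j, j) 1

lemma cnt_apply (f : Fin k → Fin n) (i : Fin n) :
    cnt f i = (univ.filter fun j => f j = i).card := by
  classical
  rw [cnt, Finsupp.finset_sum_apply, Finset.card_filter]
  exact Finset.sum_congr rfl fun j _ => by rw [Finsupp.single_apply]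

lemma mu_apply (f : Fin k → Fin n) (i : Fin n) (j0 : Fin k) :
    mu f (i, j0) = if f j0 = i then 1 else 0 := by
  classical
  rw [mu, Finsupp.finset_sum_apply, Finset.sum_eq_single j0]
  · simp [Finsupp.single_apply, Prod.ext_iff]
  · intro j _ hj
    simp [Finsupp.single_apply, Prod.ext_iff, hj]
  · simp

lemma mu_injective : Function.Injective (mu (n := n) (k := k)) := by
  intro f g h
  funext j
  have h1 := congrArg (fun m => m (f j, j)) h
  simp only [mu_apply, if_pos rfl] at h1
  by_contra hne
  rw [if_neg (Ne.symm hne)] at h1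
  exact one_ne_zero h1

/-- the slots of a monomial: one slot per unit of degree. -/
abbrev Slots (m : Fin n →₀ ℕ) : Type := Σ i : Fin n, Fin (m i)

lemma card_slots (m : Fin n →₀ ℕ) : Fintype.card (Slots m) = ∑ i, m i := by
  simp [Fintype.card_sigma]

lemma prod_slots {β : Type*} [CommMonoid β] (m : Fin n →₀ ℕ) (g : Fin n → β) :
    (∏ s : Slots m, g s.1) = ∏ i, g i ^ m i := by
  rw [← Finset.univ_sigma_univ, Finset.prod_sigma]
  simp

lemma card_fiber (m : Fin n →₀ ℕ) (i : Fin n) :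
    (univ.filter fun s : Slots m => s.1 = i).card = m i := by
  classical
  have h : (univ : Finset (Fin (m i))).card
      = (univ.filter fun s : Slots m => s.1 = i).card := by
    refine Finset.card_bij (fun c _ => (⟨i, c⟩ : Slots m)) ?_ ?_ ?_
    · intro c _; simp
    · intro c1 _ c2 _ h
      have := congrArg (fun s : Slots m => (s.2 : ℕ)) h
      exact Fin.ext this
    · rintro ⟨i', c⟩ hs
      have hi : i' = i := (Finset.mem_filter.mp hs).2
      subst hi
      exact ⟨c, mem_univ _, rfl⟩
  rw [← h, Finset.card_univ, Fintype.card_fin]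

lemma exists_unique_label {m : Fin n →₀ ℕ} (hml : ∀ i, m i ≤ 1) {f : Fin k → Fin n}
    (hf : cnt f = m) (i : Fin n) (hi : 0 < m i) :
    ∃! j, j ∈ (univ : Finset (Fin k)) ∧ f j = i := by
  classical
  have h1 : (univ.filter fun j => f j = i).card = 1 := by
    rw [← cnt_apply, hf]
    have := hml i
    omega
  rcases Finset.card_eq_one.mp h1 with ⟨a, ha⟩
  refine ⟨a, ⟨mem_univ _, ?_⟩, ?_⟩
  · have : a ∈ univ.filter fun j => f j = i := ha ▸ mem_singleton_self a
    exact (Finset.mem_filter.mp this).2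
  · rintro j ⟨-, hj⟩
    have : j ∈ univ.filter fun j => f j = i := Finset.mem_filter.mpr ⟨mem_univ _, hj⟩
    rw [ha] at this
    exact Finset.mem_singleton.mp this

/-- the slot assignment induced by a labelling with prescribed counts. -/
noncomputable def pf {m : Fin n →₀ ℕ} (hml : ∀ i, m i ≤ 1) {f : Fin k → Fin n}
    (hf : cnt f = m) (s : Slots m) : Fin k :=
  Finset.choose (fun j => f j = s.1) univ (exists_unique_label hml hf s.1 s.2.pos)

lemma pf_spec {m : Fin n →₀ ℕ} (hml : ∀ i, m i ≤ 1) {f : Fin k → Fin n}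
    (hf : cnt f = m) (s : Slots m) : f (pf hml hf s) = s.1 :=
  Finset.choose_property (fun j => f j = s.1) univ _

lemma pf_unique {m : Fin n →₀ ℕ} (hml : ∀ i, m i ≤ 1) {f : Fin k → Fin n}
    (hf : cnt f = m) (s : Slots m) {j : Fin k} (hj : f j = s.1) : pf hml hf s = j :=
  (exists_unique_label hml hf s.1 s.2.pos).unique
    ⟨mem_univ _, pf_spec hml hf s⟩ ⟨mem_univ _, hj⟩

lemma pf_bijective {m : Fin n →₀ ℕ} (hml : ∀ i, m i ≤ 1) {f : Fin k → Fin n}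
    (hf : cnt f = m) (hmk : Fintype.card (Slots m) = k) :
    Function.Bijective (pf hml hf) := by
  have hinj : Function.Injective (pf hml hf) := by
    rintro ⟨i1, c1⟩ ⟨i2, c2⟩ h
    have h1 : f (pf hml hf ⟨i1, c1⟩) = i1 := pf_spec hml hf ⟨i1, c1⟩
    have h2 : f (pf hml hf ⟨i2, c2⟩) = i2 := pf_spec hml hf ⟨i2, c2⟩
    rw [h] at h1
    have hii : i1 = i2 := h1.symm.trans h2
    subst hii
    have hc : c1 = c2 := by
      have hc1 := c1.2
      have hc2 := c2.2
      have := hml i1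
      exact Fin.ext (by omega)
    rw [hc]
  exact (Fintype.bijective_iff_injective_and_card _).mpr ⟨hinj, by simp [hmk]⟩

lemma cnt_of_bij {m : Fin n →₀ ℕ} (p : Slots m → Fin k) (hb : Function.Bijective p) :
    cnt (fun j => ((Equiv.ofBijective p hb).symm j).1) = m := by
  classical
  set e := Equiv.ofBijective p hb with he
  ext i
  rw [cnt_apply]
  have hcard : (univ.filter fun j => ((e.symm j).1 = i)).card
      = (univ.filter fun s : Slots m => s.1 = i).card := by
    refine Finset.card_bij (fun j _ => e.symm j) ?_ ?_ ?_
    · intro j hj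
      exact Finset.mem_filter.mpr ⟨mem_univ _, (Finset.mem_filter.mp hj).2⟩
    · intro j1 _ j2 _ h
      exact e.symm.injective h
    · intro s hs
      exact ⟨e s, Finset.mem_filter.mpr ⟨mem_univ _, by
        simpa using (Finset.mem_filter.mp hs).2⟩, by simp⟩
  rw [hcard, card_fiber]

section Ring

variable {F : Type*} [Field F] [CharP F 2]

/-- the product of `z`-variables selected by an assignment of slots to labels. -/
noncomputable def G (F : Type*) [CommSemiring F] (m : Fin n →₀ ℕ) (p : Slots m → Fin k) :
    MvPolynomial (Fin n × Fin k) F :=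
  ∏ s : Slots m, X (s.1, p s)

omit [CharP F 2] in
lemma expand (m : Fin n →₀ ℕ) (A : Finset (Fin k)) :
    (∏ i, (∑ j ∈ A, (X (i, j) : MvPolynomial (Fin n × Fin k) F)) ^ m i)
      = ∑ p ∈ Fintype.piFinset (fun _ : Slots m => A), G F m p := by
  rw [← prod_slots m (fun i => ∑ j ∈ A, (X (i, j) : MvPolynomial (Fin n × Fin k) F)),
    Finset.prod_univ_sum]
  rfl

lemma swap_sum {β : Type*} [AddCommMonoid β] (m : Fin n →₀ ℕ)
    (G : (Slots m → Fin k) → β) :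
    ∑ A ∈ (univ : Finset (Fin k)).powerset,
        ∑ p ∈ Fintype.piFinset (fun _ : Slots m => A), G p
      = ∑ p : Slots m → Fin k,
          ((univ : Finset (Fin k)).powerset.filter fun A => ∀ s, p s ∈ A).card • G p := by
  classical
  have h1 : ∀ A : Finset (Fin k), Fintype.piFinset (fun _ : Slots m => A)
      = univ.filter (fun p : Slots m → Fin k => ∀ s, p s ∈ A) := by
    intro A; ext p; simp [Fintype.mem_piFinset]
  simp_rw [h1, Finset.sum_filter]
  rw [Finset.sum_comm]
  refine Finset.sum_congr rfl fun p _ => ?_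
  rw [← Finset.sum_filter, Finset.sum_const]

lemma card_superset (B : Finset (Fin k)) :
    ((univ : Finset (Fin k)).powerset.filter fun A => B ⊆ A).card = 2 ^ (k - B.card) := by
  classical
  have h : ((univ : Finset (Fin k)).powerset.filter fun A => B ⊆ A).card
      = ((univ \ B).powerset).card := by
    refine Finset.card_bij' (fun A _ => A \ B) (fun C _ => C ∪ B) ?_ ?_ ?_ ?_
    · intro A hA
      simp only [mem_powerset]
      exact sdiff_subset_sdiff (subset_univ A) le_rfl
    · intro C hC
      simp only [mem_filter, mem_powerset] at hC ⊢
      exact ⟨subset_univ _, subset_union_right⟩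
    · intro A hA
      simp only [mem_filter, mem_powerset] at hA
      exact Finset.sdiff_union_of_subset hA.2
    · intro C hC
      simp only [mem_powerset] at hC
      have hd : Disjoint C B := Finset.disjoint_left.mpr
        fun a ha => (Finset.mem_sdiff.mp (hC ha)).2
      show (C ∪ B) \ B = C
      rw [Finset.union_sdiff_right]
      exact Finset.sdiff_eq_self_of_disjoint hd
  rw [h, Finset.card_powerset, Finset.card_sdiff_of_subset (subset_univ B), Finset.card_univ,
    Fintype.card_fin]

lemma two_pow_nsmul {R : Type*} [Semiring R] [CharP R 2] (t : ℕ) (ht : t ≠ 0) (x : R) :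
    (2 ^ t) • x = 0 := by
  rw [nsmul_eq_mul, Nat.cast_pow, Nat.cast_ofNat, CharTwo.two_eq_zero, zero_pow ht, zero_mul]

lemma sieve (m : Fin n →₀ ℕ) :
    ∑ A ∈ (univ : Finset (Fin k)).powerset,
        ∑ p ∈ Fintype.piFinset (fun _ : Slots m => A), G F m p
      = ∑ p ∈ univ.filter (fun p : Slots m → Fin k => Function.Surjective p), G F m p := by
  classical
  rw [swap_sum, Finset.sum_filter]
  refine Finset.sum_congr rfl fun p _ => ?_
  have hB : ((univ : Finset (Fin k)).powerset.filter fun A => ∀ s, p s ∈ A)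
      = ((univ : Finset (Fin k)).powerset.filter fun A => Finset.image p univ ⊆ A) := by
    refine Finset.filter_congr fun A _ => ?_
    simp [Finset.image_subset_iff]
  rw [hB, card_superset]
  by_cases hs : Function.Surjective p
  · have himg : Finset.image p univ = univ := by
      apply Finset.eq_univ_of_forall
      intro j
      rcases hs j with ⟨s, rfl⟩
      exact mem_image_of_mem _ (mem_univ _)
    rw [himg, if_pos hs, Finset.card_univ, Fintype.card_fin, Nat.sub_self, pow_zero, one_smul]
  · rw [if_neg hs]
    have hne : Finset.image p univ ≠ univ := by
      intro h
      apply hs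
      intro j
      have : j ∈ Finset.image p univ := h ▸ mem_univ j
      rcases Finset.mem_image.mp this with ⟨s, _, hsj⟩
      exact ⟨s, hsj⟩
    have hlt : (Finset.image p univ).card < k := by
      have h1 : (Finset.image p univ).card ≤ k := by
        simpa using Finset.card_le_card (subset_univ (Finset.image p univ))
      rcases lt_or_eq_of_le h1 with h | h
      · exact h
      · exact absurd (Finset.eq_univ_of_card _ (by simpa using h)) hne
    exact two_pow_nsmul _ (by omega) _

omit [CharP F 2] in
lemma filter_surj_eq_bij (m : Fin n →₀ ℕ) (hm : Fintype.card (Slots m) = k) :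
    (univ.filter fun p : Slots m → Fin k => Function.Surjective p)
      = univ.filter fun p : Slots m → Fin k => Function.Bijective p := by
  classical
  refine Finset.filter_congr fun p _ => ?_
  constructor
  · intro hs
    exact (Fintype.bijective_iff_surjective_and_card p).mpr ⟨hs, by simp [hm]⟩
  · exact fun hb => hb.2

lemma vanish (m : Fin n →₀ ℕ) (i0 : Fin n) (h2 : 2 ≤ m i0) :
    ∑ p ∈ univ.filter (fun p : Slots m → Fin k => Function.Bijective p), G F m p = 0 := by
  classical
  set a : Slots m := ⟨i0, ⟨0, by omega⟩⟩ with ha_def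
  set b : Slots m := ⟨i0, ⟨1, by omega⟩⟩ with hb_def
  have hab : a ≠ b := fun h => by
    have := congrArg (fun s : Slots m => (s.2 : ℕ)) h
    simp [ha_def, hb_def] at this
  have hfst : ∀ s : Slots m, (Equiv.swap a b s).1 = s.1 := by
    intro s
    rcases eq_or_ne s a with rfl | hsa
    · rw [Equiv.swap_apply_left]
    rcases eq_or_ne s b with rfl | hsb
    · rw [Equiv.swap_apply_right]
    · rw [Equiv.swap_apply_of_ne_of_ne hsa hsb]
  refine Finset.sum_involution (fun p _ => p ∘ Equiv.swap a b) ?_ ?_ ?_ ?_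
  · intro p _
    have hG : G F m (p ∘ Equiv.swap a b) = G F m p := by
      unfold G
      calc (∏ s : Slots m, (X (s.1, p (Equiv.swap a b s)) : MvPolynomial (Fin n × Fin k) F))
          = ∏ s : Slots m, X ((Equiv.swap a b s).1, p (Equiv.swap a b s)) :=
            Finset.prod_congr rfl fun s _ => by rw [hfst s]
        _ = ∏ s : Slots m, X (s.1, p s) :=
            Equiv.prod_comp (Equiv.swap a b) (fun s => X (s.1, p s))
    rw [hG]
    exact CharTwo.add_self_eq_zero _
  · intro p hp _
    have hbij : Function.Bijective p := (Finset.mem_filter.mp hp).2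
    intro heq
    have h1 : p (Equiv.swap a b a) = p a := congrFun heq a
    rw [Equiv.swap_apply_left] at h1
    exact hab (hbij.1 h1).symm
  · intro p hp
    have hbij : Function.Bijective p := (Finset.mem_filter.mp hp).2
    exact Finset.mem_filter.mpr ⟨mem_univ _, hbij.comp (Equiv.swap a b).bijective⟩
  · intro p _
    funext s
    simp [Function.comp, Equiv.swap_apply_self]

omit [CharP F 2] in
lemma reindex (m : Fin n →₀ ℕ) (hml : ∀ i, m i ≤ 1) (hmk : Fintype.card (Slots m) = k) :
    ∑ p ∈ univ.filter (fun p : Slots m → Fin k => Function.Bijective p), G F m p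
      = ∑ f ∈ univ.filter (fun f : Fin k → Fin n => cnt f = m),
          ∏ j, (X (f j, j) : MvPolynomial (Fin n × Fin k) F) := by
  classical
  refine Finset.sum_bij'
    (fun p hp => fun j =>
      ((Equiv.ofBijective p ((Finset.mem_filter.mp hp).2)).symm j).1)
    (fun f hf => pf hml ((Finset.mem_filter.mp hf).2))
    ?_ ?_ ?_ ?_ ?_
  · intro p hp
    exact Finset.mem_filter.mpr ⟨mem_univ _, cnt_of_bij p ((Finset.mem_filter.mp hp).2)⟩
  · intro f hf
    exact Finset.mem_filter.mpr
      ⟨mem_univ _, pf_bijective hml ((Finset.mem_filter.mp hf).2) hmk⟩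
  · -- left inverse
    intro p hp
    funext s
    set e := Equiv.ofBijective p ((Finset.mem_filter.mp hp).2) with he
    refine pf_unique hml _ s ?_
    show (e.symm (p s)).1 = s.1
    have h3 : e.symm (p s) = s := e.symm_apply_apply s
    rw [h3]
  · -- right inverse
    intro f hf
    funext j0
    set hb := pf_bijective hml ((Finset.mem_filter.mp hf).2) hmk with hbd
    set E := Equiv.ofBijective _ hb with hE
    show (E.symm j0).1 = f j0
    have h2 : pf hml ((Finset.mem_filter.mp hf).2) (E.symm j0) = j0 := E.apply_symm_apply j0
    have h3 := pf_spec hml ((Finset.mem_filter.mp hf).2) (E.symm j0)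
    rw [h2] at h3
    exact h3.symm
  · -- values agree
    intro p hp
    set e := Equiv.ofBijective p ((Finset.mem_filter.mp hp).2) with he
    unfold G
    rw [← Equiv.prod_comp e.symm
      (fun s => (X (s.1, p s) : MvPolynomial (Fin n × Fin k) F))]
    refine Finset.prod_congr rfl fun j _ => ?_
    rw [show p (e.symm j) = j from e.apply_symm_apply j]

omit [CharP F 2] in
lemma prod_X_eq (f : Fin k → Fin n) :
    (∏ j, (X (f j, j) : MvPolynomial (Fin n × Fin k) F)) = monomial (mu f) 1 := by
  classical
  rw [mu]
  induction (univ : Finset (Fin k)) using Finset.induction with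
  | empty => simp
  | insert _ _ hx ih =>
      rw [Finset.prod_insert hx, Finset.sum_insert hx, ih]
      rw [show (X (f _, _) : MvPolynomial (Fin n × Fin k) F)
        = monomial (Finsupp.single (f _, _) 1) 1 from rfl, monomial_mul, one_mul]

omit [CharP F 2] in
lemma deg_eq (P : MvPolynomial (Fin n) F) (hP : P.IsHomogeneous k)
    {m : Fin n →₀ ℕ} (hm : m ∈ P.support) : ∑ i, m i = k := by
  have h1 : m.degree = k := by
    by_contra hne
    exact mem_support_iff.mp hm (hP.coeff_eq_zero hne)
  rw [← h1, Finsupp.degree]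
  exact (Finset.sum_subset (subset_univ _)
    (fun i _ hi => Finsupp.notMem_support_iff.mp hi)).symm

lemma main_id (P : MvPolynomial (Fin n) F) (hP : P.IsHomogeneous k) :
    (∑ A ∈ (Finset.univ : Finset (Fin k)).powerset,
        MvPolynomial.eval₂ MvPolynomial.C
          (fun i => ∑ j ∈ A, (MvPolynomial.X (i, j) :
            MvPolynomial (Fin n × Fin k) F)) P)
      = ∑ m ∈ P.support.filter (fun m => ∀ i, m i ≤ 1),
          ∑ f ∈ univ.filter (fun f : Fin k → Fin n => cnt f = m),
            monomial (mu f) (P.coeff m) := by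
  classical
  have hdeg : ∀ m ∈ P.support, Fintype.card (Slots m) = k := by
    intro m hm
    rw [card_slots]
    exact deg_eq P hP hm
  have e1 : ∀ A ∈ (univ : Finset (Fin k)).powerset,
      MvPolynomial.eval₂ MvPolynomial.C
          (fun i => ∑ j ∈ A, (MvPolynomial.X (i, j) : MvPolynomial (Fin n × Fin k) F)) P
        = ∑ m ∈ P.support, C (P.coeff m) *
            ∑ p ∈ Fintype.piFinset (fun _ : Slots m => A), G F m p := by
    intro A _
    rw [eval₂_eq']
    exact Finset.sum_congr rfl fun m _ => by rw [expand]
  rw [Finset.sum_congr rfl e1, Finset.sum_comm]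
  have e2 : ∀ m ∈ P.support,
      (∑ A ∈ (univ : Finset (Fin k)).powerset, C (P.coeff m) *
          ∑ p ∈ Fintype.piFinset (fun _ : Slots m => A), G F m p)
        = C (P.coeff m) *
            ∑ p ∈ univ.filter (fun p : Slots m → Fin k => Function.Bijective p), G F m p := by
    intro m hm
    rw [← mul_sum, sieve, filter_surj_eq_bij m (hdeg m hm)]
  rw [Finset.sum_congr rfl e2]
  rw [← Finset.sum_filter_add_sum_filter_not P.support (fun m => ∀ i, m i ≤ 1)]
  have e3 : ∑ m ∈ P.support.filter (fun m => ¬ ∀ i, m i ≤ 1),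
      C (P.coeff m) *
        ∑ p ∈ univ.filter (fun p : Slots m → Fin k => Function.Bijective p), G F m p = 0 := by
    refine Finset.sum_eq_zero fun m hm => ?_
    have hnm : ¬ ∀ i, m i ≤ 1 := (Finset.mem_filter.mp hm).2
    push_neg at hnm
    rcases hnm with ⟨i0, hi0⟩
    rw [vanish m i0 (by omega), mul_zero]
  rw [e3, add_zero]
  refine Finset.sum_congr rfl fun m hm => ?_
  have hml : ∀ i, m i ≤ 1 := (Finset.mem_filter.mp hm).2
  have hms : m ∈ P.support := (Finset.mem_filter.mp hm).1
  rw [reindex m hml (hdeg m hms), mul_sum]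
  refine Finset.sum_congr rfl fun f _ => ?_
  rw [prod_X_eq, C_mul_monomial, mul_one]

end Ring

end Stmt7Aux

/-- multilinear sieving: Let `P` be a polynomial over a field of
characteristic 2 that is homogeneous of degree `k` in the variables `x₁,…,x_n`,
let `L` be a set of `k` labels, and for each subset `A ⊆ L` substitute
`xᵢ ↦ zᵢ^A = Σ_{j∈A} z_{i,j}`.  Then `Q = Σ_{A ⊆ L} P(z₁^A,…,z_n^A)` is
identically zero iff `P` has no multilinear monomial of degree `k`. -/
theorem stmt7 {F : Type*} [Field F] [CharP F 2] {n k : ℕ}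
    (P : MvPolynomial (Fin n) F) (hP : P.IsHomogeneous k) :
    (∑ A ∈ (Finset.univ : Finset (Fin k)).powerset,
        MvPolynomial.eval₂ MvPolynomial.C
          (fun i => ∑ j ∈ A, (MvPolynomial.X (i, j) :
            MvPolynomial (Fin n × Fin k) F)) P) = 0 ↔
      ¬ ∃ m ∈ P.support, (∀ i, m i ≤ 1) ∧ (∑ i, m i) = k := by
  classical
  open Stmt7Aux in
  rw [Stmt7Aux.main_id P hP]
  constructor
  · intro hQ
    rintro ⟨m0, hm0s, hm0l, -⟩
    -- build a labelling realizing m0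
    have hcard : m0.support.card = k := by
      have h1 : ∑ i, m0 i = k := Stmt7Aux.deg_eq P hP hm0s
      have h2 : ∑ i ∈ m0.support, m0 i = ∑ i, m0 i :=
        Finset.sum_subset (Finset.subset_univ _)
          (fun i _ hi => Finsupp.notMem_support_iff.mp hi)
      have h3 : ∑ i ∈ m0.support, m0 i = m0.support.card := by
        rw [Finset.card_eq_sum_ones]
        refine Finset.sum_congr rfl fun i hi => ?_
        have := hm0l i
        have := Finsupp.mem_support_iff.mp hi
        omega
      omega
    have e0 : Fin k ≃ {x // x ∈ m0.support} :=
      (finCongr hcard.symm).trans m0.support.equivFin.symm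
    set f0 : Fin k → Fin n := fun j => (e0 j : Fin n) with hf0d
    have hf0 : Stmt7Aux.cnt f0 = m0 := by
      ext i
      rw [Stmt7Aux.cnt_apply]
      by_cases hi : i ∈ m0.support
      · have hfil : (Finset.univ.filter fun j => f0 j = i) = {e0.symm ⟨i, hi⟩} := by
          ext j
          simp only [Finset.mem_filter, Finset.mem_univ, true_and, Finset.mem_singleton]
          constructor
          · intro h
            rw [Equiv.eq_symm_apply]
            exact Subtype.ext h
          · rintro rfl
            simp [hf0d]
        rw [hfil, Finset.card_singleton]
        have := hm0l i
        have := Finsupp.mem_support_iff.mp hi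
        omega
      · have hfil : (Finset.univ.filter fun j => f0 j = i) = ∅ := by
          ext j
          simp only [Finset.mem_filter, Finset.mem_univ, true_and, Finset.notMem_empty,
            iff_false]
          intro h
          exact hi (h ▸ (e0 j).2)
        rw [hfil, Finset.card_empty]
        exact (Finsupp.notMem_support_iff.mp hi).symm
    have hm0mlin : m0 ∈ P.support.filter (fun m => ∀ i, m i ≤ 1) :=
      Finset.mem_filter.mpr ⟨hm0s, hm0l⟩
    have hf0mem : f0 ∈ Finset.univ.filter (fun f : Fin k → Fin n => Stmt7Aux.cnt f = m0) :=
      Finset.mem_filter.mpr ⟨Finset.mem_univ _, hf0⟩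
    have h2 := congrArg (MvPolynomial.coeff (Stmt7Aux.mu f0)) hQ
    rw [MvPolynomial.coeff_sum] at h2
    rw [Finset.sum_eq_single_of_mem m0 hm0mlin ?hother] at h2
    case hother =>
      intro m hm hne
      rw [MvPolynomial.coeff_sum]
      refine Finset.sum_eq_zero fun f hf => ?_
      rw [MvPolynomial.coeff_monomial, if_neg]
      intro hmu
      have : f = f0 := Stmt7Aux.mu_injective hmu
      subst this
      exact hne ((Finset.mem_filter.mp hf).2.symm.trans hf0 |>.symm ▸ rfl)
    rw [MvPolynomial.coeff_sum, Finset.sum_eq_single_of_mem f0 hf0mem ?fother] at h2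
    case fother =>
      intro f _ hne
      rw [MvPolynomial.coeff_monomial, if_neg]
      exact fun hmu => hne (Stmt7Aux.mu_injective hmu)
    rw [MvPolynomial.coeff_monomial, if_pos rfl, MvPolynomial.coeff_zero] at h2
    exact MvPolynomial.mem_support_iff.mp hm0s h2
  · intro hne
    have hempty : P.support.filter (fun m => ∀ i, m i ≤ 1) = ∅ := by
      rw [Finset.filter_eq_empty_iff]
      intro m hm hml
      exact hne ⟨m, hm, hml, Stmt7Aux.deg_eq P hP hm⟩
    rw [hempty, Finset.sum_empty]
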